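/- arXiv:2408.06695 — 3 statements merged into one kernel-verified Lean document; each statement's English description precedes it below -/
import Mathlib

section
/- Under the recursive setup: (1) if for every t ∈ {k,…,m} one has Φ_t ⪯ Φ^f_t ⪯ Φ^t_t, Φ^{ts}_t ⪰ 0 and ΔQ_{t−1} ≺ 0, then Σ^f_m ⪯ Σ_m ⪯ Σ^t_m; (2) if for every t ∈ {k,…,m} one has Φ^t_t ⪯ Φ^f_t ⪯ Φ_t, Φ^{ts}_t ⪰ 0 and ΔQ_{t−1} ≻ 0, then Σ_m ⪯ Σ^t_m ⪯ Σ^f_m. (Theorem 7 of the paper: recursive relations among the three performance evaluation indices.) -/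
set_option maxHeartbeats 1000000
set_option linter.unusedSectionVars false

open Matrix

namespace Stmt17Aux

variable {n m : Type*} [Fintype n] [DecidableEq n] [Fintype m] [DecidableEq m]

lemma psd_smul {c : ℝ} (hc : 0 ≤ c) {A : Matrix n n ℝ} (hA : A.PosSemidef) :
    (c • A).PosSemidef := by
  have h1 : (c • A).IsHermitian := by
    have := hA.1
    rw [IsHermitian] at this ⊢
    rw [conjTranspose_smul, this, star_trivial]
  refine ⟨h1, fun x => ?_⟩
  exact (hA.smul hc).2 x

lemma symm_of_psd {A : Matrix n n ℝ} (hA : A.PosSemidef) : Aᵀ = A := by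
  have := hA.isHermitian
  rwa [IsHermitian, conjTranspose_eq_transpose_of_trivial] at this

lemma symm_of_pd {A : Matrix n n ℝ} (hA : A.PosDef) : Aᵀ = A :=
  symm_of_psd hA.posSemidef

lemma psd_cong {A : Matrix n n ℝ} (hA : A.PosSemidef) (B : Matrix m n ℝ) :
    (B * A * Bᵀ).PosSemidef := by
  have := hA.mul_mul_conjTranspose_same B
  rwa [conjTranspose_eq_transpose_of_trivial] at this

lemma psd_congT {A : Matrix n n ℝ} (hA : A.PosSemidef) (B : Matrix n m ℝ) :
    (Bᵀ * A * B).PosSemidef := by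
  have := hA.conjTranspose_mul_mul_same B
  rwa [conjTranspose_eq_transpose_of_trivial] at this

lemma psd_sum {ι : Type*} (s : Finset ι) (f : ι → Matrix n n ℝ)
    (h : ∀ i ∈ s, (f i).PosSemidef) : (∑ i ∈ s, f i).PosSemidef := by
  classical
  induction s using Finset.induction with
  | empty => simpa using Matrix.PosSemidef.zero
  | insert _ _ hx ih =>
    rw [Finset.sum_insert hx]
    exact ((h _ (Finset.mem_insert_self _ _)).add
      (ih fun i hi => h i (Finset.mem_insert_of_mem hi)))

lemma inv_symm {A : Matrix n n ℝ} (hA : Aᵀ = A) : (A⁻¹)ᵀ = A⁻¹ := by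
  rw [transpose_nonsing_inv, hA]

/-- inverse is antitone on positive definite matrices -/
lemma inv_antitone {A B : Matrix n n ℝ} (hA : A.PosDef) (hB : B.PosDef)
    (hAB : (B - A).PosSemidef) : (A⁻¹ - B⁻¹).PosSemidef := by
  have hAs := symm_of_pd hA
  have hBs := symm_of_pd hB
  have hAi : A * A⁻¹ = 1 := mul_nonsing_inv A hA.det_pos.ne'.isUnit
  have hAi' : A⁻¹ * A = 1 := nonsing_inv_mul A hA.det_pos.ne'.isUnit
  have hBi : B * B⁻¹ = 1 := mul_nonsing_inv B hB.det_pos.ne'.isUnit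
  have key : A⁻¹ - B⁻¹ =
      (A⁻¹ - B⁻¹) * A * (A⁻¹ - B⁻¹)ᵀ + B⁻¹ * (B - A) * (B⁻¹)ᵀ := by
    rw [transpose_sub, inv_symm hAs, inv_symm hBs]
    simp only [Matrix.sub_mul, Matrix.mul_sub, Matrix.mul_assoc,
      Matrix.nonsing_inv_mul_cancel_left _ _ hA.det_pos.ne'.isUnit,
      Matrix.mul_nonsing_inv _ hA.det_pos.ne'.isUnit,
      Matrix.mul_nonsing_inv _ hB.det_pos.ne'.isUnit, Matrix.mul_one]
    abel
  rw [key]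
  exact (psd_cong hA.posSemidef _).add (psd_cong hAB _)

lemma joseph {n N : ℕ} {P : Matrix (Fin n) (Fin n) ℝ} (hP : P.PosDef)
    {md : Fin N → ℕ} (H : ∀ j, Matrix (Fin (md j)) (Fin n) ℝ)
    (R : ∀ j, Matrix (Fin (md j)) (Fin (md j)) ℝ) (hR : ∀ j, (R j).PosDef)
    (a : Fin N → ℝ) (ha : ∀ j, 0 ≤ a j)
    (M : ∀ j, Matrix (Fin n) (Fin (md j)) ℝ) :
    ((1 - ∑ j, a j • (M j * H j)) * P * (1 - ∑ j, a j • (M j * H j))ᵀ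
      + ∑ j, a j • (M j * R j * (M j)ᵀ)
      - (P⁻¹ + ∑ j, a j • ((H j)ᵀ * (R j)⁻¹ * H j))⁻¹).PosSemidef := by
  have hPs : Pᵀ = P := symm_of_pd hP
  have hPu : IsUnit P.det := hP.det_pos.ne'.isUnit
  set Φ : Matrix (Fin n) (Fin n) ℝ := ∑ j, a j • ((H j)ᵀ * (R j)⁻¹ * H j) with hΦdef
  have hΦpsd : Φ.PosSemidef :=
    psd_sum _ _ fun j _ => psd_smul (ha j) (psd_congT (hR j).inv.posSemidef (H j))
  have hX : (P⁻¹ + Φ).PosDef := hP.inv.add_posSemidef hΦpsd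
  have hXu : IsUnit (P⁻¹ + Φ).det := hX.det_pos.ne'.isUnit
  set Sg : Matrix (Fin n) (Fin n) ℝ := (P⁻¹ + Φ)⁻¹ with hSgdef
  have hSgpd : Sg.PosDef := hX.inv
  have hSgs : Sgᵀ = Sg := symm_of_pd hSgpd
  have hSgX : Sg * (P⁻¹ + Φ) = 1 := nonsing_inv_mul _ hXu
  have hXSg : (P⁻¹ + Φ) * Sg = 1 := mul_nonsing_inv _ hXu
  set D : ∀ j, Matrix (Fin n) (Fin (md j)) ℝ :=
    fun j => M j - Sg * (H j)ᵀ * (R j)⁻¹ with hDdef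
  set G : Matrix (Fin n) (Fin n) ℝ := ∑ j, a j • (D j * H j) with hGdef
  have hMj : ∀ j, M j = D j + Sg * (H j)ᵀ * (R j)⁻¹ := fun j => by
    simp only [hDdef]; abel
  -- sum decomposition for the gain
  have hsumMH : ∑ j, a j • (M j * H j) = G + Sg * Φ := by
    have : ∀ j, a j • (M j * H j)
        = a j • (D j * H j) + a j • (Sg * ((H j)ᵀ * (R j)⁻¹ * H j)) := fun j => by
      rw [hMj j]
      simp only [Matrix.add_mul, smul_add, Matrix.mul_assoc]
    rw [Finset.sum_congr rfl fun j _ => this j, Finset.sum_add_distrib, hGdef, hΦdef,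
      Finset.mul_sum]
    congr 1
    exact Finset.sum_congr rfl fun j _ => (mul_smul_comm _ _ _).symm
  set B : Matrix (Fin n) (Fin n) ℝ := 1 - ∑ j, a j • (M j * H j) with hBdef
  have hB : B = Sg * P⁻¹ - G := by
    rw [hBdef, hsumMH, ← hSgX]
    simp only [Matrix.mul_add]
    abel
  -- expand B * P * Bᵀ
  have hBt : Bᵀ = P⁻¹ * Sg - Gᵀ := by
    rw [hB, transpose_sub, transpose_mul, inv_symm hPs, hSgs]
  have hBPB : B * P * Bᵀ = Sg * P⁻¹ * Sg - Sg * Gᵀ - G * Sg + G * P * Gᵀ := by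
    rw [hBt, hB]
    simp only [Matrix.sub_mul, Matrix.mul_sub, Matrix.mul_assoc,
      Matrix.nonsing_inv_mul_cancel_left _ _ hPu,
      Matrix.mul_nonsing_inv_cancel_left _ _ hPu]
    abel
  -- expand the measurement-noise sum
  have hsumMRM : ∑ j, a j • (M j * R j * (M j)ᵀ)
      = (∑ j, a j • (D j * R j * (D j)ᵀ)) + G * Sg + Sg * Gᵀ + Sg * Φ * Sg := by
    have hterm : ∀ j, a j • (M j * R j * (M j)ᵀ)
        = a j • (D j * R j * (D j)ᵀ) + a j • (D j * (H j * Sg))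
          + a j • (Sg * ((H j)ᵀ * (D j)ᵀ)) + a j • (Sg * ((H j)ᵀ * (R j)⁻¹ * H j) * Sg) := by
      intro j
      have hRu : IsUnit (R j).det := (hR j).det_pos.ne'.isUnit
      have hRs : (R j)ᵀ = R j := symm_of_pd (hR j)
      have hMt : (M j)ᵀ = (D j)ᵀ + (R j)⁻¹ * (H j * Sg) := by
        rw [hMj j, transpose_add, transpose_mul, transpose_mul, inv_symm hRs, hSgs,
          transpose_transpose]
      rw [hMt, hMj j]
      simp only [Matrix.add_mul, Matrix.mul_add, smul_add, Matrix.mul_assoc,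
        Matrix.mul_nonsing_inv_cancel_left _ _ hRu,
        Matrix.nonsing_inv_mul_cancel_left _ _ hRu]
      abel
    rw [Finset.sum_congr rfl fun j _ => hterm j]
    simp only [Finset.sum_add_distrib]
    congr 1
    · congr 1
      · congr 1
        · -- ∑ a • (D * (H * Sg)) = G * Sg
          rw [hGdef, Finset.sum_mul]
          exact Finset.sum_congr rfl fun j _ => by
            rw [smul_mul_assoc, Matrix.mul_assoc]
      · -- ∑ a • (Sg * (Hᵀ * Dᵀ)) = Sg * Gᵀ
        rw [hGdef, transpose_sum, Finset.mul_sum]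
        exact Finset.sum_congr rfl fun j _ => by
          rw [transpose_smul, transpose_mul, mul_smul_comm]
    · -- ∑ a • (Sg * X * Sg) = Sg * Φ * Sg
      rw [hΦdef, Finset.mul_sum, Finset.sum_mul]
      exact Finset.sum_congr rfl fun j _ => by
        rw [mul_smul_comm, smul_mul_assoc]
  -- assemble
  have hkey : B * P * Bᵀ + ∑ j, a j • (M j * R j * (M j)ᵀ)
      = Sg + (G * P * Gᵀ + ∑ j, a j • (D j * R j * (D j)ᵀ)) := by
    have h1 : Sg * P⁻¹ * Sg + Sg * Φ * Sg = Sg := by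
      rw [← Matrix.add_mul, ← Matrix.mul_add, hSgX, Matrix.one_mul]
    rw [hBPB, hsumMRM]
    conv_rhs => rw [← h1]
    abel
  have hfin : B * P * Bᵀ + (∑ j, a j • (M j * R j * (M j)ᵀ)) - Sg
      = G * P * Gᵀ + ∑ j, a j • (D j * R j * (D j)ᵀ) := by
    rw [hkey]; abel
  rw [hfin]
  exact (psd_cong hP.posSemidef G).add
    (psd_sum _ _ fun j _ => psd_smul (ha j) (psd_cong (hR j).posSemidef (D j)))

section Steps
variable {n N : ℕ} {md : Fin N → ℕ}
  {F Sp Sfp Stp Q Qu Phi1 Phif1 Phit1 Phits1 Sig1 Sigf1 Sigt1 : Matrix (Fin n) (Fin n) ℝ}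
  {H : ∀ j, Matrix (Fin (md j)) (Fin n) ℝ}
  {a : Fin N → ℝ}
  {R Ru : ∀ j, Matrix (Fin (md j)) (Fin (md j)) ℝ}

lemma phiPSD (ha : ∀ j, 0 ≤ a j) (hR : ∀ j, (R j).PosDef) :
    (∑ j, a j • ((H j)ᵀ * (R j)⁻¹ * H j)).PosSemidef :=
  psd_sum _ _ fun j _ => psd_smul (ha j) (psd_congT (hR j).inv.posSemidef (H j))

lemma priorPD (hSp : Sp.PosSemidef) (hQ : Q.PosDef) : (F * Sp * Fᵀ + Q).PosDef :=
  Matrix.PosDef.posSemidef_add (psd_cong hSp F) hQ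

lemma postPD (hP : (F * Sp * Fᵀ + Q).PosDef) (hPhi : Phi1.PosSemidef)
    (hSig1 : Sig1 = ((F * Sp * Fᵀ + Q)⁻¹ + Phi1)⁻¹) : Sig1.PosDef := by
  rw [hSig1]; exact (hP.inv.add_posSemidef hPhi).inv

/-- step for `Σ − Σᶠ ⪰ 0` (part 1) -/
lemma step_lower (hSp : Sp.PosSemidef) (hSfp : Sfp.PosSemidef)
    (hQ : Q.PosDef) (hQu : Qu.PosDef)
    (hPhi : Phi1.PosSemidef) (hPhif : Phif1.PosSemidef)
    (hSig1 : Sig1 = ((F * Sp * Fᵀ + Q)⁻¹ + Phi1)⁻¹)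
    (hSigf1 : Sigf1 = ((F * Sfp * Fᵀ + Qu)⁻¹ + Phif1)⁻¹)
    (hdiff : (Sp - Sfp).PosSemidef) (hPhid : (Phif1 - Phi1).PosSemidef)
    (hQd : (Q - Qu).PosDef) : (Sig1 - Sigf1).PosSemidef := by
  set P1 := F * Sp * Fᵀ + Q with hP1
  set Pf := F * Sfp * Fᵀ + Qu with hPf
  have hP1pd : P1.PosDef := priorPD hSp hQ
  have hPfpd : Pf.PosDef := priorPD hSfp hQu
  have hPPf : (P1 - Pf).PosSemidef := by
    have he : P1 - Pf = F * (Sp - Sfp) * Fᵀ + (Q - Qu) := by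
      rw [hP1, hPf]
      simp only [Matrix.mul_sub, Matrix.sub_mul]
      abel
    rw [he]
    exact (psd_cong hdiff F).add hQd.posSemidef
  have hinv : (Pf⁻¹ - P1⁻¹).PosSemidef := inv_antitone hPfpd hP1pd hPPf
  have hX1 : (P1⁻¹ + Phi1).PosDef := hP1pd.inv.add_posSemidef hPhi
  have hXf : (Pf⁻¹ + Phif1).PosDef := hPfpd.inv.add_posSemidef hPhif
  have hXX : ((Pf⁻¹ + Phif1) - (P1⁻¹ + Phi1)).PosSemidef := by
    have he : (Pf⁻¹ + Phif1) - (P1⁻¹ + Phi1) = (Pf⁻¹ - P1⁻¹) + (Phif1 - Phi1) := by abel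
    rw [he]; exact hinv.add hPhid
  rw [hSig1, hSigf1]
  exact inv_antitone hX1 hXf hXX

/-- step for `Σᵗ − Σ ⪰ 0` (common to both parts) -/
lemma step_mid (ha : ∀ j, 0 ≤ a j) (hR : ∀ j, (R j).PosDef) (hRu : ∀ j, (Ru j).PosDef)
    (hPhi1 : Phi1 = ∑ j, a j • ((H j)ᵀ * (R j)⁻¹ * H j))
    (hPhif1 : Phif1 = ∑ j, a j • ((H j)ᵀ * (Ru j)⁻¹ * H j))
    (hPhit1 : Phit1 = ∑ j, (a j) ^ 2 • ((H j)ᵀ * (Ru j)⁻¹ * R j * (Ru j)⁻¹ * H j))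
    (hPhits1 : Phits1 = ∑ j, ((a j) ^ 2 - a j) • ((H j)ᵀ * (Ru j)⁻¹ * R j * (Ru j)⁻¹ * H j))
    (hSp : Sp.PosSemidef) (hSfp : Sfp.PosSemidef)
    (hQ : Q.PosDef) (hQu : Qu.PosDef)
    (hSig1 : Sig1 = ((F * Sp * Fᵀ + Q)⁻¹ + Phi1)⁻¹)
    (hSigf1 : Sigf1 = ((F * Sfp * Fᵀ + Qu)⁻¹ + Phif1)⁻¹)
    (hSigt1 : Sigt1 = (Sigf1 * (F * Sfp * Fᵀ + Qu)⁻¹) * (F * Stp * Fᵀ + Q)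
        * (Sigf1 * (F * Sfp * Fᵀ + Qu)⁻¹)ᵀ + Sigf1 * Phit1 * Sigf1)
    (hdiff : (Stp - Sp).PosSemidef) (hPhitsPSD : Phits1.PosSemidef) :
    (Sigt1 - Sig1).PosSemidef := by
  set P1 := F * Sp * Fᵀ + Q with hP1
  set Pf := F * Sfp * Fᵀ + Qu with hPf
  set Pt := F * Stp * Fᵀ + Q with hPt
  have hP1pd : P1.PosDef := priorPD hSp hQ
  have hPfpd : Pf.PosDef := priorPD hSfp hQu
  have hPhiPSD : Phi1.PosSemidef := by rw [hPhi1]; exact phiPSD ha hR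
  have hPhifPSD : Phif1.PosSemidef := by rw [hPhif1]; exact phiPSD ha hRu
  have hSigf1pd : Sigf1.PosDef := postPD hPfpd hPhifPSD hSigf1
  have hSigf1s : Sigf1ᵀ = Sigf1 := symm_of_pd hSigf1pd
  set A := Sigf1 * Pf⁻¹ with hA
  -- Joseph's lemma with the actual noise covariances
  have hjos := joseph hP1pd H R hR a ha (fun j => Sigf1 * (H j)ᵀ * (Ru j)⁻¹)
  -- identify the gain
  have hXf : (Pf⁻¹ + Phif1).PosDef := hPfpd.inv.add_posSemidef hPhifPSD
  have hSfXf : Sigf1 * (Pf⁻¹ + Phif1) = 1 := by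
    rw [hSigf1]; exact nonsing_inv_mul _ hXf.det_pos.ne'.isUnit
  have e1 : 1 - ∑ j, a j • (Sigf1 * (H j)ᵀ * (Ru j)⁻¹ * H j) = A := by
    have hs : ∑ j, a j • (Sigf1 * (H j)ᵀ * (Ru j)⁻¹ * H j) = Sigf1 * Phif1 := by
      rw [hPhif1, Finset.mul_sum]
      exact Finset.sum_congr rfl fun j _ => by
        rw [mul_smul_comm]
        congr 1
        simp only [Matrix.mul_assoc]
    rw [hs, hA, ← hSfXf]
    simp only [Matrix.mul_add]
    abel
  -- identify the noise term
  have e2 : ∑ j, a j • (Sigf1 * (H j)ᵀ * (Ru j)⁻¹ * (R j) * (Sigf1 * (H j)ᵀ * (Ru j)⁻¹)ᵀ)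
      = Sigf1 * (Phit1 - Phits1) * Sigf1 := by
    have hd : Phit1 - Phits1 = ∑ j, a j • ((H j)ᵀ * (Ru j)⁻¹ * R j * (Ru j)⁻¹ * H j) := by
      rw [hPhit1, hPhits1, ← Finset.sum_sub_distrib]
      exact Finset.sum_congr rfl fun j _ => by rw [← sub_smul, sub_sub_cancel]
    rw [hd, Finset.mul_sum, Finset.sum_mul]
    refine Finset.sum_congr rfl fun j _ => ?_
    rw [mul_smul_comm, smul_mul_assoc]
    congr 1
    rw [transpose_mul, transpose_mul, inv_symm (symm_of_pd (hRu j)), transpose_transpose,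
      hSigf1s]
    simp only [Matrix.mul_assoc]
  have e3 : (P1⁻¹ + ∑ j, a j • ((H j)ᵀ * (R j)⁻¹ * H j))⁻¹ = Sig1 := by
    rw [← hPhi1, ← hSig1]
  rw [e1, e2, e3] at hjos
  -- remaining pieces
  have p1 : (A * (Pt - P1) * Aᵀ).PosSemidef := by
    have he : Pt - P1 = F * (Stp - Sp) * Fᵀ := by
      rw [hPt, hP1]
      simp only [Matrix.mul_sub, Matrix.sub_mul]
      abel
    exact psd_cong (he ▸ psd_cong hdiff F) A
  have p2 : (Sigf1 * Phits1 * Sigf1).PosSemidef := by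
    have := psd_cong hPhitsPSD Sigf1
    rwa [hSigf1s] at this
  have decomp : Sigt1 - Sig1 = A * (Pt - P1) * Aᵀ + Sigf1 * Phits1 * Sigf1
      + (A * P1 * Aᵀ + Sigf1 * (Phit1 - Phits1) * Sigf1 - Sig1) := by
    rw [hSigt1]
    simp only [Matrix.mul_sub, Matrix.sub_mul]
    abel
  rw [decomp]
  exact (p1.add p2).add hjos

/-- step for `Σᶠ − Σᵗ ⪰ 0` (part 2) -/
lemma step_upper (ha : ∀ j, 0 ≤ a j) (hRu : ∀ j, (Ru j).PosDef)
    (hPhif1 : Phif1 = ∑ j, a j • ((H j)ᵀ * (Ru j)⁻¹ * H j))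
    (hSfp : Sfp.PosSemidef) (hQu : Qu.PosDef)
    (hSigf1 : Sigf1 = ((F * Sfp * Fᵀ + Qu)⁻¹ + Phif1)⁻¹)
    (hSigt1 : Sigt1 = (Sigf1 * (F * Sfp * Fᵀ + Qu)⁻¹) * (F * Stp * Fᵀ + Q)
        * (Sigf1 * (F * Sfp * Fᵀ + Qu)⁻¹)ᵀ + Sigf1 * Phit1 * Sigf1)
    (hdiff : (Sfp - Stp).PosSemidef) (hPhid : (Phif1 - Phit1).PosSemidef)
    (hQd : (Qu - Q).PosDef) : (Sigf1 - Sigt1).PosSemidef := by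
  set Pf := F * Sfp * Fᵀ + Qu with hPf
  set Pt := F * Stp * Fᵀ + Q with hPt
  have hPfpd : Pf.PosDef := priorPD hSfp hQu
  have hPfu : IsUnit Pf.det := hPfpd.det_pos.ne'.isUnit
  have hPhifPSD : Phif1.PosSemidef := by rw [hPhif1]; exact phiPSD ha hRu
  have hSigf1pd : Sigf1.PosDef := postPD hPfpd hPhifPSD hSigf1
  have hSigf1s : Sigf1ᵀ = Sigf1 := symm_of_pd hSigf1pd
  set A := Sigf1 * Pf⁻¹ with hA
  have hXf : (Pf⁻¹ + Phif1).PosDef := hPfpd.inv.add_posSemidef hPhifPSD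
  have hSfXf : Sigf1 * (Pf⁻¹ + Phif1) = 1 := by
    rw [hSigf1]; exact nonsing_inv_mul _ hXf.det_pos.ne'.isUnit
  have hAt : Aᵀ = Pf⁻¹ * Sigf1 := by
    rw [hA, transpose_mul, inv_symm (symm_of_pd hPfpd), hSigf1s]
  -- the fixed point identity Σᶠ = A Pᶠ Aᵀ + Σᶠ Φᶠ Σᶠ
  have hsum : Sigf1 * Pf⁻¹ * Sigf1 + Sigf1 * Phif1 * Sigf1 = Sigf1 := by
    rw [← Matrix.add_mul, ← Matrix.mul_add, hSfXf, Matrix.one_mul]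
  have h2 : A * Pf * Aᵀ = Sigf1 * Pf⁻¹ * Sigf1 := by
    rw [hAt, hA, Matrix.mul_assoc Sigf1 Pf⁻¹ Pf, nonsing_inv_mul _ hPfu, Matrix.mul_one,
      ← Matrix.mul_assoc]
  have hfix : Sigf1 = A * Pf * Aᵀ + Sigf1 * Phif1 * Sigf1 := by
    rw [h2, hsum]
  have decomp : Sigf1 - Sigt1 = A * (Pf - Pt) * Aᵀ + Sigf1 * (Phif1 - Phit1) * Sigf1 := by
    nth_rewrite 1 [hfix]
    rw [hSigt1]
    simp only [Matrix.mul_sub, Matrix.sub_mul]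
    abel
  have hPfPt : (Pf - Pt).PosSemidef := by
    have he : Pf - Pt = F * (Sfp - Stp) * Fᵀ + (Qu - Q) := by
      rw [hPf, hPt]
      simp only [Matrix.mul_sub, Matrix.sub_mul]
      abel
    rw [he]
    exact (psd_cong hdiff F).add hQd.posSemidef
  have p2 : (Sigf1 * (Phif1 - Phit1) * Sigf1).PosSemidef := by
    have := psd_cong hPhid Sigf1
    rwa [hSigf1s] at this
  rw [decomp]
  exact (psd_cong hPfPt A).add p2

end Steps
end Stmt17Aux

/-- Theorem 7 of the paper (recursive relations): starting from a common initial
matrix `S` at time `k−1` and iterating the standard, nominal, and actual recursions,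
(1) if for every `t ∈ {k,…,m}` one has `Φ_t ⪯ Φᶠ_t ⪯ Φᵗ_t`, `Φᵗˢ_t ⪰ 0` and
`ΔQ_{t−1} ≺ 0`, then `Σᶠ_m ⪯ Σ_m ⪯ Σᵗ_m`; (2) if for every `t ∈ {k,…,m}` one has
`Φᵗ_t ⪯ Φᶠ_t ⪯ Φ_t`, `Φᵗˢ_t ⪰ 0` and `ΔQ_{t−1} ≻ 0`, then `Σ_m ⪯ Σᵗ_m ⪯ Σᶠ_m`. -/
theorem stmt17 {n N : ℕ} (hn : 1 ≤ n) (hN : 1 ≤ N)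
    (k m : ℤ) (hkm : k ≤ m)
    (F : Matrix (Fin n) (Fin n) ℝ)
    (md : Fin N → ℕ) (hmd : ∀ j, 1 ≤ md j)
    (H : ∀ j, Matrix (Fin (md j)) (Fin n) ℝ)
    (a : Fin N → ℝ) (ha : ∀ j, 0 ≤ a j)
    (R Ru : ∀ j, ℤ → Matrix (Fin (md j)) (Fin (md j)) ℝ)
    (hRsymm : ∀ j t, k ≤ t → t ≤ m → (R j t).IsSymm)
    (hRusymm : ∀ j t, k ≤ t → t ≤ m → (Ru j t).IsSymm)
    (hR : ∀ j t, k ≤ t → t ≤ m → (R j t).PosDef)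
    (hRu : ∀ j t, k ≤ t → t ≤ m → (Ru j t).PosDef)
    (Q Qu : ℤ → Matrix (Fin n) (Fin n) ℝ)
    (hQsymm : ∀ t, k - 1 ≤ t → t ≤ m - 1 → (Q t).IsSymm)
    (hQusymm : ∀ t, k - 1 ≤ t → t ≤ m - 1 → (Qu t).IsSymm)
    (hQ : ∀ t, k - 1 ≤ t → t ≤ m - 1 → (Q t).PosDef)
    (hQu : ∀ t, k - 1 ≤ t → t ≤ m - 1 → (Qu t).PosDef)
    (Phi Phif Phit Phits : ℤ → Matrix (Fin n) (Fin n) ℝ)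
    (hPhi : ∀ t, Phi t = ∑ j, a j • ((H j)ᵀ * (R j t)⁻¹ * H j))
    (hPhif : ∀ t, Phif t = ∑ j, a j • ((H j)ᵀ * (Ru j t)⁻¹ * H j))
    (hPhit : ∀ t, Phit t =
      ∑ j, (a j) ^ 2 • ((H j)ᵀ * (Ru j t)⁻¹ * R j t * (Ru j t)⁻¹ * H j))
    (hPhits : ∀ t, Phits t =
      ∑ j, ((a j) ^ 2 - a j) • ((H j)ᵀ * (Ru j t)⁻¹ * R j t * (Ru j t)⁻¹ * H j))
    (S : Matrix (Fin n) (Fin n) ℝ) (hS : S.PosSemidef)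
    (Sig Sigf Sigt : ℤ → Matrix (Fin n) (Fin n) ℝ)
    (hSigInit : Sig (k - 1) = S)
    (hSigfInit : Sigf (k - 1) = S)
    (hSigtInit : Sigt (k - 1) = S)
    (hSigRec : ∀ t, k ≤ t → t ≤ m →
      Sig t = ((F * Sig (t - 1) * Fᵀ + Q (t - 1))⁻¹ + Phi t)⁻¹)
    (hSigfRec : ∀ t, k ≤ t → t ≤ m →
      Sigf t = ((F * Sigf (t - 1) * Fᵀ + Qu (t - 1))⁻¹ + Phif t)⁻¹)
    (hSigtRec : ∀ t, k ≤ t → t ≤ m →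
      Sigt t = (Sigf t * (F * Sigf (t - 1) * Fᵀ + Qu (t - 1))⁻¹)
          * (F * Sigt (t - 1) * Fᵀ + Q (t - 1))
          * (Sigf t * (F * Sigf (t - 1) * Fᵀ + Qu (t - 1))⁻¹)ᵀ
        + Sigf t * Phit t * Sigf t) :
    ((∀ t, k ≤ t → t ≤ m →
        (Phif t - Phi t).PosSemidef ∧ (Phit t - Phif t).PosSemidef ∧
        (Phits t).PosSemidef ∧ (Q (t - 1) - Qu (t - 1)).PosDef) →
      (Sig m - Sigf m).PosSemidef ∧ (Sigt m - Sig m).PosSemidef) ∧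
    ((∀ t, k ≤ t → t ≤ m →
        (Phif t - Phit t).PosSemidef ∧ (Phi t - Phif t).PosSemidef ∧
        (Phits t).PosSemidef ∧ (Qu (t - 1) - Q (t - 1)).PosDef) →
      (Sigt m - Sig m).PosSemidef ∧ (Sigf m - Sigt m).PosSemidef) := by
  constructor
  · -- Part 1
    intro hc
    have key : ∀ t : ℤ, k - 1 ≤ t → t ≤ m →
        (Sig t).PosSemidef ∧ (Sigf t).PosSemidef ∧
        (Sig t - Sigf t).PosSemidef ∧ (Sigt t - Sig t).PosSemidef := by
      refine fun t ht => Int.le_induction (motive := fun t _ => t ≤ m →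
        (Sig t).PosSemidef ∧ (Sigf t).PosSemidef ∧
        (Sig t - Sigf t).PosSemidef ∧ (Sigt t - Sig t).PosSemidef) ?_ ?_ t ht
      · intro _
        rw [hSigInit, hSigfInit, hSigtInit, sub_self]
        exact ⟨hS, hS, Matrix.PosSemidef.zero, Matrix.PosSemidef.zero⟩
      · intro t ht ih h1
        have htm : t ≤ m := by omega
        obtain ⟨ih1, ih2, ih3, ih4⟩ := ih htm
        have hts : t + 1 - 1 = t := by ring
        have hrec := hSigRec (t + 1) (by omega) h1
        have hrecf := hSigfRec (t + 1) (by omega) h1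
        have hrect := hSigtRec (t + 1) (by omega) h1
        rw [hts] at hrec hrecf hrect
        obtain ⟨hc1, hc2, hc3, hc4⟩ := hc (t + 1) (by omega) h1
        rw [hts] at hc4
        have hQt := hQ t (by omega) (by omega)
        have hQut := hQu t (by omega) (by omega)
        have hRt : ∀ j, (R j (t + 1)).PosDef := fun j => hR j (t + 1) (by omega) h1
        have hRut : ∀ j, (Ru j (t + 1)).PosDef := fun j => hRu j (t + 1) (by omega) h1
        have hPhiPSD : (Phi (t + 1)).PosSemidef := by
          rw [hPhi]; exact Stmt17Aux.phiPSD ha hRt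
        have hPhifPSD : (Phif (t + 1)).PosSemidef := by
          rw [hPhif]; exact Stmt17Aux.phiPSD ha hRut
        have hSig1pd := Stmt17Aux.postPD (Stmt17Aux.priorPD ih1 hQt) hPhiPSD hrec
        have hSigf1pd := Stmt17Aux.postPD (Stmt17Aux.priorPD ih2 hQut) hPhifPSD hrecf
        refine ⟨hSig1pd.posSemidef, hSigf1pd.posSemidef, ?_, ?_⟩
        · exact Stmt17Aux.step_lower ih1 ih2 hQt hQut hPhiPSD hPhifPSD hrec hrecf ih3 hc1 hc4
        · exact Stmt17Aux.step_mid ha hRt hRut (hPhi (t + 1)) (hPhif (t + 1)) (hPhit (t + 1))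
            (hPhits (t + 1)) ih1 ih2 hQt hQut hrec hrecf hrect ih4 hc3
    exact ⟨(key m (by omega) le_rfl).2.2.1, (key m (by omega) le_rfl).2.2.2⟩
  · -- Part 2
    intro hc
    have key : ∀ t : ℤ, k - 1 ≤ t → t ≤ m →
        (Sig t).PosSemidef ∧ (Sigf t).PosSemidef ∧
        (Sigt t - Sig t).PosSemidef ∧ (Sigf t - Sigt t).PosSemidef := by
      refine fun t ht => Int.le_induction (motive := fun t _ => t ≤ m →
        (Sig t).PosSemidef ∧ (Sigf t).PosSemidef ∧
        (Sigt t - Sig t).PosSemidef ∧ (Sigf t - Sigt t).PosSemidef) ?_ ?_ t ht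
      · intro _
        rw [hSigInit, hSigfInit, hSigtInit, sub_self]
        exact ⟨hS, hS, Matrix.PosSemidef.zero, Matrix.PosSemidef.zero⟩
      · intro t ht ih h1
        have htm : t ≤ m := by omega
        obtain ⟨ih1, ih2, ih3, ih4⟩ := ih htm
        have hts : t + 1 - 1 = t := by ring
        have hrec := hSigRec (t + 1) (by omega) h1
        have hrecf := hSigfRec (t + 1) (by omega) h1
        have hrect := hSigtRec (t + 1) (by omega) h1
        rw [hts] at hrec hrecf hrect
        obtain ⟨hc1, hc2, hc3, hc4⟩ := hc (t + 1) (by omega) h1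
        rw [hts] at hc4
        have hQt := hQ t (by omega) (by omega)
        have hQut := hQu t (by omega) (by omega)
        have hRt : ∀ j, (R j (t + 1)).PosDef := fun j => hR j (t + 1) (by omega) h1
        have hRut : ∀ j, (Ru j (t + 1)).PosDef := fun j => hRu j (t + 1) (by omega) h1
        have hPhiPSD : (Phi (t + 1)).PosSemidef := by
          rw [hPhi]; exact Stmt17Aux.phiPSD ha hRt
        have hPhifPSD : (Phif (t + 1)).PosSemidef := by
          rw [hPhif]; exact Stmt17Aux.phiPSD ha hRut
        have hSig1pd := Stmt17Aux.postPD (Stmt17Aux.priorPD ih1 hQt) hPhiPSD hrec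
        have hSigf1pd := Stmt17Aux.postPD (Stmt17Aux.priorPD ih2 hQut) hPhifPSD hrecf
        refine ⟨hSig1pd.posSemidef, hSigf1pd.posSemidef, ?_, ?_⟩
        · exact Stmt17Aux.step_mid ha hRt hRut (hPhi (t + 1)) (hPhif (t + 1)) (hPhit (t + 1))
            (hPhits (t + 1)) ih1 ih2 hQt hQut hrec hrecf hrect ih3 hc3
        · exact Stmt17Aux.step_upper ha hRut (hPhif (t + 1)) ih2 hQut hrecf hrect ih4 hc1 hc4
    exact ⟨(key m (by omega) le_rfl).2.2.1, (key m (by omega) le_rfl).2.2.2⟩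
end

section
/- Steady-state trace identities: under the sensor setup and steady-state hypotheses, with S^f = Σ^f F^T P F Σ^f, it holds that Tr(Σ̄^t) = Tr(S^f Φ^t) + Tr(P Q) and Tr(Σ̄^f) = Tr(S^f Φ^f) + Tr(P Q^u). (Key identity proved in the paper's derivation of Theorem 9.) -/
open Matrix

private lemma tr_ly {n : ℕ} (P Fb X C : Matrix (Fin n) (Fin n) ℝ)
    (hP : P = Fbᵀ * P * Fb + 1) (hX : X = Fb * X * Fbᵀ + C) :
    X.trace = (P * C).trace := by
  have h1 : P - Fbᵀ * P * Fb = 1 := by nth_rewrite 1 [hP]; exact add_sub_cancel_left _ _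
  have hXC : Fb * X * Fbᵀ = X - C := by nth_rewrite 2 [hX]; exact (add_sub_cancel_right _ _).symm
  calc X.trace = ((P - Fbᵀ * P * Fb) * X).trace := by rw [h1, one_mul]
    _ = (P * X).trace - (Fbᵀ * P * Fb * X).trace := by
        rw [Matrix.sub_mul, Matrix.trace_sub]
    _ = (P * X).trace - (P * (Fb * X * Fbᵀ)).trace := by
        rw [show Fbᵀ * P * Fb * X = Fbᵀ * (P * (Fb * X)) from by
              simp [Matrix.mul_assoc],
            Matrix.trace_mul_comm Fbᵀ (P * (Fb * X)),
            show P * (Fb * X) * Fbᵀ = P * (Fb * X * Fbᵀ) from by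
              simp [Matrix.mul_assoc]]
    _ = (P * C).trace := by
        rw [hXC, Matrix.mul_sub, Matrix.trace_sub]; ring

/-- Key identity in the paper's derivation of Theorem 9 (steady-state trace
identities): with `Sᶠ = Σᶠ Fᵀ P F Σᶠ`, one has
`Tr(Σ̄ᵗ) = Tr(Sᶠ Φᵗ) + Tr(P Q)` and `Tr(Σ̄ᶠ) = Tr(Sᶠ Φᶠ) + Tr(P Qᵘ)`. -/
theorem stmt18 {n N : ℕ} (hn : 1 ≤ n) (hN : 1 ≤ N)
    (md : Fin N → ℕ) (hmd : ∀ j, 1 ≤ md j)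
    (H : ∀ j, Matrix (Fin (md j)) (Fin n) ℝ)
    (R Ru : ∀ j, Matrix (Fin (md j)) (Fin (md j)) ℝ)
    (hRsymm : ∀ j, (R j).IsSymm) (hRusymm : ∀ j, (Ru j).IsSymm)
    (hR : ∀ j, (R j).PosDef) (hRu : ∀ j, (Ru j).PosDef)
    (a : Fin N → ℝ) (ha : ∀ j, 0 ≤ a j)
    (Phif Phit : Matrix (Fin n) (Fin n) ℝ)
    (hPhif : Phif = ∑ j, a j • ((H j)ᵀ * (Ru j)⁻¹ * H j))
    (hPhit : Phit = ∑ j, (a j) ^ 2 • ((H j)ᵀ * (Ru j)⁻¹ * R j * (Ru j)⁻¹ * H j))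
    (F Q Qu : Matrix (Fin n) (Fin n) ℝ)
    (hQsymm : Q.IsSymm) (hQusymm : Qu.IsSymm)
    (hQ : Q.PosDef) (hQu : Qu.PosDef)
    (Sigf Sigfbar : Matrix (Fin n) (Fin n) ℝ)
    (hSigfsymm : Sigf.IsSymm) (hSigfbarsymm : Sigfbar.IsSymm)
    (hSigf : Sigf.PosDef) (hSigfbar : Sigfbar.PosDef)
    (hRic1 : Sigf = (Sigfbar⁻¹ + Phif)⁻¹)
    (hRic2 : Sigfbar = F * Sigf * Fᵀ + Qu)
    (hspec : ∀ μ ∈ spectrum ℂ ((F * Sigf * Sigfbar⁻¹).map Complex.ofReal),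
      ‖μ‖ < 1)
    (P : Matrix (Fin n) (Fin n) ℝ) (hPsymm : P.IsSymm)
    (hP : P = (F * Sigf * Sigfbar⁻¹)ᵀ * P * (F * Sigf * Sigfbar⁻¹)
      + (1 : Matrix (Fin n) (Fin n) ℝ))
    (Sigt Sigtbar : Matrix (Fin n) (Fin n) ℝ)
    (hSigtsymm : Sigt.IsSymm) (hSigtbarsymm : Sigtbar.IsSymm)
    (hLy1 : Sigt = (Sigf * Sigfbar⁻¹) * Sigtbar * (Sigf * Sigfbar⁻¹)ᵀ
      + Sigf * Phit * Sigf)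
    (hLy2 : Sigtbar = F * Sigt * Fᵀ + Q) :
    Sigtbar.trace = ((Sigf * Fᵀ * P * F * Sigf) * Phit).trace + (P * Q).trace ∧
    Sigfbar.trace = ((Sigf * Fᵀ * P * F * Sigf) * Phif).trace + (P * Qu).trace := by
  have hdetb : IsUnit Sigfbar.det := isUnit_iff_ne_zero.mpr hSigfbar.det_pos.ne'
  have hdetf : IsUnit Sigf.det := isUnit_iff_ne_zero.mpr hSigf.det_pos.ne'
  have hs : Sigfᵀ = Sigf := hSigfsymm
  have hi : Sigfbar⁻¹ᵀ = Sigfbar⁻¹ := by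
    rw [Matrix.transpose_nonsing_inv, hSigfbarsymm]
  -- general trace rearrangement
  have cyc : ∀ M : Matrix (Fin n) (Fin n) ℝ,
      ((Sigf * Fᵀ * P * F * Sigf) * M).trace
        = (P * (F * Sigf * M * Sigf * Fᵀ)).trace := by
    intro M
    rw [show Sigf * Fᵀ * P * F * Sigf * M = (Sigf * Fᵀ) * (P * (F * (Sigf * M))) from by
          simp [Matrix.mul_assoc],
        Matrix.trace_mul_comm (Sigf * Fᵀ) (P * (F * (Sigf * M))),
        show P * (F * (Sigf * M)) * (Sigf * Fᵀ) = P * (F * Sigf * M * Sigf * Fᵀ) from by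
          simp [Matrix.mul_assoc]]
  constructor
  · -- first identity
    have hX1 : Sigtbar = (F * Sigf * Sigfbar⁻¹) * Sigtbar * (F * Sigf * Sigfbar⁻¹)ᵀ
        + (F * Sigf * Phit * Sigf * Fᵀ + Q) := by
      nth_rewrite 1 [hLy2, hLy1]
      simp only [Matrix.transpose_mul, hi, hs]
      noncomm_ring
    have := tr_ly P (F * Sigf * Sigfbar⁻¹) Sigtbar
      (F * Sigf * Phit * Sigf * Fᵀ + Q) hP hX1
    rw [this, Matrix.mul_add, Matrix.trace_add, cyc Phit]
  · -- second identity
    have hdetm : IsUnit (Sigfbar⁻¹ + Phif).det := by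
      rw [← Matrix.isUnit_nonsing_inv_det_iff, ← hRic1]; exact hdetf
    have hkey : Sigf * (Sigfbar⁻¹ + Phif) = 1 := by
      rw [hRic1]; exact Matrix.nonsing_inv_mul _ hdetm
    have hkey2 : Sigf * Sigfbar⁻¹ = 1 - Sigf * Phif := by
      have := hkey
      rw [Matrix.mul_add] at this
      linear_combination (norm := noncomm_ring) this
    have hsum : Sigf * Sigfbar⁻¹ * Sigf + Sigf * Phif * Sigf = Sigf := by
      rw [hkey2, Matrix.sub_mul, Matrix.one_mul]
      exact sub_add_cancel _ _
    have hmid : (F * Sigf * Sigfbar⁻¹) * Sigfbar * (F * Sigf * Sigfbar⁻¹)ᵀ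
        = F * (Sigf * Sigfbar⁻¹ * Sigf) * Fᵀ := by
      simp only [Matrix.transpose_mul, hi, hs, Matrix.mul_assoc]
      rw [Matrix.nonsing_inv_mul_cancel_left _ _ hdetb]
    have hX2 : Sigfbar = (F * Sigf * Sigfbar⁻¹) * Sigfbar * (F * Sigf * Sigfbar⁻¹)ᵀ
        + (F * Sigf * Phif * Sigf * Fᵀ + Qu) := by
      rw [hmid]
      nth_rewrite 1 [hRic2]
      rw [show F * Sigf * Fᵀ = F * (Sigf * Sigfbar⁻¹ * Sigf + Sigf * Phif * Sigf) * Fᵀ from by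
            rw [hsum]]
      noncomm_ring
    have := tr_ly P (F * Sigf * Sigfbar⁻¹) Sigfbar
      (F * Sigf * Phif * Sigf * Fᵀ + Qu) hP hX2
    rw [this, Matrix.mul_add, Matrix.trace_add, cyc Phif]
end

section
/- Under the sensor setup and steady-state hypotheses, define S^f = Σ^f F^T P F Σ^f and ρ = Σ_{j=1}^N |a_j^2 − a_j| · ‖S^f‖_F · ‖H_j^T (R_j^u)^{-1} H_j‖_F + sqrt( Σ_{j=1}^N Σ_{k=1}^N a_j^2 a_k^2 ‖(R_j^u)^{-1} H_j S^f H_k^T (R_k^u)^{-1}‖_F^2 ) · sqrt( Σ_{j : a_j > 0} ‖ΔR_j‖_F^2 ) + ‖P‖_F · ‖ΔQ‖_F. Then max{0, Tr(Σ̄^f) − ρ} ≤ Tr(Σ̄^t) ≤ Tr(Σ̄^f) + ρ. (Theorem 9 of the paper: the trace of the steady-state estimation error covariance is bounded in terms of the Frobenius norms of the noise covariance deviations and the trace of the steady-state nominal performance evaluation index.) -/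
open Matrix

/-- Frobenius norm of a real matrix. -/
noncomputable def frob {α β : Type*} [Fintype α] [Fintype β] (A : Matrix α β ℝ) : ℝ :=
  Real.sqrt (∑ i, ∑ j, (A i j) ^ 2)

/-!
Auxiliary lemmas
-/

lemma frob_nonneg {α β : Type*} [Fintype α] [Fintype β] (A : Matrix α β ℝ) : 0 ≤ frob A :=
  Real.sqrt_nonneg _

lemma frob_sq {α β : Type*} [Fintype α] [Fintype β] (A : Matrix α β ℝ) :
    frob A ^ 2 = ∑ i, ∑ j, (A i j) ^ 2 :=
  Real.sq_sqrt (Finset.sum_nonneg fun _ _ => Finset.sum_nonneg fun _ _ => sq_nonneg _)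

lemma abs_sum_mul_le {ι : Type*} (s : Finset ι) (f g : ι → ℝ) :
    |∑ i ∈ s, f i * g i| ≤ Real.sqrt (∑ i ∈ s, f i ^ 2) * Real.sqrt (∑ i ∈ s, g i ^ 2) := by
  have h := Finset.sum_mul_sq_le_sq_mul_sq s f g
  calc |∑ i ∈ s, f i * g i| = Real.sqrt ((∑ i ∈ s, f i * g i) ^ 2) :=
        (Real.sqrt_sq_eq_abs _).symm
    _ ≤ Real.sqrt ((∑ i ∈ s, f i ^ 2) * ∑ i ∈ s, g i ^ 2) := Real.sqrt_le_sqrt h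
    _ = _ := Real.sqrt_mul (Finset.sum_nonneg fun _ _ => sq_nonneg _) _

lemma abs_trace_mul_le {α β : Type*} [Fintype α] [Fintype β]
    (A : Matrix α β ℝ) (B : Matrix β α ℝ) :
    |Matrix.trace (A * B)| ≤ frob A * frob B := by
  have htr : Matrix.trace (A * B) = ∑ p : α × β, A p.1 p.2 * B p.2 p.1 := by
    rw [Fintype.sum_prod_type]
    simp [Matrix.trace, Matrix.diag, Matrix.mul_apply]
  have h2 := Finset.sum_mul_sq_le_sq_mul_sq Finset.univ
    (fun p : α × β => A p.1 p.2) (fun p : α × β => B p.2 p.1)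
  have e1 : (∑ p : α × β, (A p.1 p.2) ^ 2) = frob A ^ 2 := by
    rw [frob_sq, Fintype.sum_prod_type]
  have e2 : (∑ p : α × β, (B p.2 p.1) ^ 2) = frob B ^ 2 := by
    rw [frob_sq, Fintype.sum_prod_type, Finset.sum_comm]
  calc |Matrix.trace (A * B)| = Real.sqrt ((Matrix.trace (A * B)) ^ 2) :=
        (Real.sqrt_sq_eq_abs _).symm
    _ ≤ Real.sqrt (frob A ^ 2 * frob B ^ 2) := by
        apply Real.sqrt_le_sqrt; rw [htr, ← e1, ← e2]; exact h2
    _ = frob A * frob B := by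
        rw [Real.sqrt_mul (sq_nonneg _), Real.sqrt_sq (frob_nonneg _),
          Real.sqrt_sq (frob_nonneg _)]

lemma psd_trace_nonneg {n : ℕ} {M : Matrix (Fin n) (Fin n) ℝ} (h : M.PosSemidef) :
    0 ≤ M.trace := by
  rw [Matrix.trace]
  refine Finset.sum_nonneg fun i _ => ?_
  have hx := h.diag_nonneg (i := i)
  simpa [Matrix.mulVec_single, Matrix.diag] using hx

/-- Theorem 9 of the paper: with `Sᶠ = Σᶠ Fᵀ P F Σᶠ` and
`ρ = ∑ⱼ |aⱼ² − aⱼ| ‖Sᶠ‖_F ‖Hⱼᵀ (Rⱼᵘ)⁻¹ Hⱼ‖_F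
  + sqrt(∑ⱼ ∑ₖ aⱼ² aₖ² ‖(Rⱼᵘ)⁻¹ Hⱼ Sᶠ Hₖᵀ (Rₖᵘ)⁻¹‖_F²) · sqrt(∑_{j : aⱼ>0} ‖ΔRⱼ‖_F²)
  + ‖P‖_F ‖ΔQ‖_F`,
one has `max{0, Tr(Σ̄ᶠ) − ρ} ≤ Tr(Σ̄ᵗ) ≤ Tr(Σ̄ᶠ) + ρ`. -/
theorem stmt19 {n N : ℕ} (hn : 1 ≤ n) (hN : 1 ≤ N)
    (md : Fin N → ℕ) (hmd : ∀ j, 1 ≤ md j)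
    (H : ∀ j, Matrix (Fin (md j)) (Fin n) ℝ)
    (R Ru : ∀ j, Matrix (Fin (md j)) (Fin (md j)) ℝ)
    (hRsymm : ∀ j, (R j).IsSymm) (hRusymm : ∀ j, (Ru j).IsSymm)
    (hR : ∀ j, (R j).PosDef) (hRu : ∀ j, (Ru j).PosDef)
    (dR : ∀ j, Matrix (Fin (md j)) (Fin (md j)) ℝ)
    (hdR : ∀ j, dR j = Ru j - R j)
    (a : Fin N → ℝ) (ha : ∀ j, 0 ≤ a j)
    (Phif Phit : Matrix (Fin n) (Fin n) ℝ)
    (hPhif : Phif = ∑ j, a j • ((H j)ᵀ * (Ru j)⁻¹ * H j))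
    (hPhit : Phit = ∑ j, (a j) ^ 2 • ((H j)ᵀ * (Ru j)⁻¹ * R j * (Ru j)⁻¹ * H j))
    (F Q Qu dQ : Matrix (Fin n) (Fin n) ℝ)
    (hQsymm : Q.IsSymm) (hQusymm : Qu.IsSymm)
    (hQ : Q.PosDef) (hQu : Qu.PosDef)
    (hdQ : dQ = Qu - Q)
    (Sigf Sigfbar : Matrix (Fin n) (Fin n) ℝ)
    (hSigfsymm : Sigf.IsSymm) (hSigfbarsymm : Sigfbar.IsSymm)
    (hSigf : Sigf.PosDef) (hSigfbar : Sigfbar.PosDef)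
    (hRic1 : Sigf = (Sigfbar⁻¹ + Phif)⁻¹)
    (hRic2 : Sigfbar = F * Sigf * Fᵀ + Qu)
    (hspec : ∀ μ ∈ spectrum ℂ ((F * Sigf * Sigfbar⁻¹).map Complex.ofReal),
      ‖μ‖ < 1)
    (P : Matrix (Fin n) (Fin n) ℝ) (hPsymm : P.IsSymm)
    (hP : P = (F * Sigf * Sigfbar⁻¹)ᵀ * P * (F * Sigf * Sigfbar⁻¹)
      + (1 : Matrix (Fin n) (Fin n) ℝ))
    (Sigt Sigtbar : Matrix (Fin n) (Fin n) ℝ)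
    (hSigt : Sigt.PosSemidef) (hSigtbar : Sigtbar.PosSemidef)
    (hLy1 : Sigt = (Sigf * Sigfbar⁻¹) * Sigtbar * (Sigf * Sigfbar⁻¹)ᵀ
      + Sigf * Phit * Sigf)
    (hLy2 : Sigtbar = F * Sigt * Fᵀ + Q)
    (Sf : Matrix (Fin n) (Fin n) ℝ) (hSf : Sf = Sigf * Fᵀ * P * F * Sigf)
    (ρ : ℝ)
    (hρ : ρ = (∑ j, |(a j) ^ 2 - a j| * frob Sf * frob ((H j)ᵀ * (Ru j)⁻¹ * H j))
      + Real.sqrt (∑ j, ∑ k,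
          (a j) ^ 2 * (a k) ^ 2 * (frob ((Ru j)⁻¹ * H j * Sf * (H k)ᵀ * (Ru k)⁻¹)) ^ 2)
        * Real.sqrt (∑ j ∈ Finset.univ.filter (fun j => 0 < a j), (frob (dR j)) ^ 2)
      + frob P * frob dQ) :
    max 0 (Sigfbar.trace - ρ) ≤ Sigtbar.trace ∧ Sigtbar.trace ≤ Sigfbar.trace + ρ := by
  -- basic invertibility facts
  have hSBdet : IsUnit Sigfbar.det := hSigfbar.det_pos.ne'.isUnit
  have hMdet : IsUnit (Sigfbar⁻¹ + Phif).det := by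
    rw [← Matrix.isUnit_nonsing_inv_det_iff, ← hRic1]
    exact hSigf.det_pos.ne'.isUnit
  have hAone : Sigf * (Sigfbar⁻¹ + Phif) = 1 := by
    rw [hRic1]; exact Matrix.nonsing_inv_mul _ hMdet
  have hA' : Sigf * Sigfbar⁻¹ = 1 - Sigf * Phif := by
    rw [Matrix.mul_add] at hAone
    exact eq_sub_of_add_eq hAone
  have hSBinvT : (Sigfbar⁻¹)ᵀ = Sigfbar⁻¹ := by
    rw [Matrix.transpose_nonsing_inv, hSigfbarsymm.eq]
  set Fb := F * Sigf * Sigfbar⁻¹ with hFb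
  have hFbT : Fbᵀ = Sigfbar⁻¹ * (Sigf * Fᵀ) := by
    rw [hFb, Matrix.transpose_mul, Matrix.transpose_mul, hSBinvT, hSigfsymm.eq]
  -- Lyapunov-type identities
  have key1 : Sigf * Sigfbar⁻¹ * Sigf = Sigf - Sigf * Phif * Sigf := by
    rw [hA', Matrix.sub_mul, Matrix.one_mul]
  have Ef : Sigfbar - Fb * Sigfbar * Fbᵀ = F * Sigf * Phif * Sigf * Fᵀ + Qu := by
    have h1 : Fb * Sigfbar * Fbᵀ = F * (Sigf * Sigfbar⁻¹ * Sigf) * Fᵀ := by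
      rw [hFbT, hFb]
      simp only [Matrix.mul_assoc]
      rw [Matrix.nonsing_inv_mul_cancel_left _ _ hSBdet]
    rw [h1, key1]
    conv_lhs => rw [hRic2]
    noncomm_ring
  have Et : Sigtbar - Fb * Sigtbar * Fbᵀ = F * Sigf * Phit * Sigf * Fᵀ + Q := by
    have hT : Sigtbar = Fb * Sigtbar * Fbᵀ + (F * Sigf * Phit * Sigf * Fᵀ + Q) := by
      conv_lhs => rw [hLy2, hLy1]
      rw [hFbT, hFb, Matrix.transpose_mul, hSBinvT, hSigfsymm.eq]
      simp only [Matrix.mul_add, Matrix.add_mul, Matrix.mul_assoc]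
      abel
    exact sub_eq_iff_eq_add'.mpr hT
  -- trace identity
  set W := F * Sigf * (Phit - Phif) * Sigf * Fᵀ - dQ with hW
  set D := Sigtbar - Sigfbar with hD
  have hDW : D - Fb * D * Fbᵀ = W := by
    have lhs_eq : D - Fb * D * Fbᵀ
        = (Sigtbar - Fb * Sigtbar * Fbᵀ) - (Sigfbar - Fb * Sigfbar * Fbᵀ) := by
      rw [hD]; noncomm_ring
    rw [lhs_eq, Et, Ef, hW, hdQ]
    noncomm_ring
  have htrD : D.trace = (W * P).trace := by
    have hI : (1 : Matrix (Fin n) (Fin n) ℝ) = P - Fbᵀ * P * Fb :=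
      (sub_eq_iff_eq_add'.mpr hP).symm
    have h1 : D.trace = (D * (P - Fbᵀ * P * Fb)).trace := by
      rw [← hI, Matrix.mul_one]
    have h3 : (D * (Fbᵀ * P * Fb)).trace = ((Fb * D * Fbᵀ) * P).trace := by
      have e : D * (Fbᵀ * P * Fb) = (D * Fbᵀ * P) * Fb := by noncomm_ring
      rw [e, Matrix.trace_mul_comm]
      congr 1
      noncomm_ring
    have h4 : Fb * D * Fbᵀ = D - W := by rw [← hDW]; noncomm_ring
    rw [h1, Matrix.mul_sub, Matrix.trace_sub, h3, h4, Matrix.sub_mul, Matrix.trace_sub]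
    rw [Matrix.sub_mul, Matrix.trace_sub, hD, Matrix.sub_mul, Matrix.trace_sub]
    ring
  have htrW : (W * P).trace = ((Phit - Phif) * Sf).trace - (P * dQ).trace := by
    rw [hW, Matrix.sub_mul, Matrix.trace_sub]
    congr 1
    · have e : F * Sigf * (Phit - Phif) * Sigf * Fᵀ * P
          = (F * (Sigf * (Phit - Phif))) * (Sigf * Fᵀ * P) := by noncomm_ring
      rw [e, Matrix.trace_mul_comm, hSf]
      have e2 : Sigf * Fᵀ * P * (F * (Sigf * (Phit - Phif)))
          = (Sigf * Fᵀ * P * F * Sigf) * (Phit - Phif) := by noncomm_ring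
      rw [e2, Matrix.trace_mul_comm]
    · rw [Matrix.trace_mul_comm]
  -- expansion of (Phit - Phif) * Sf
  have hsplit : Phit - Phif
      = (∑ j, ((a j) ^ 2 - a j) • ((H j)ᵀ * (Ru j)⁻¹ * H j))
        - ∑ j, (a j) ^ 2 • ((H j)ᵀ * (Ru j)⁻¹ * dR j * (Ru j)⁻¹ * H j) := by
    rw [hPhit, hPhif, ← Finset.sum_sub_distrib, ← Finset.sum_sub_distrib]
    refine Finset.sum_congr rfl fun j _ => ?_
    have hRj : R j = Ru j - dR j := by rw [hdR]; abel
    have hcanc : (H j)ᵀ * (Ru j)⁻¹ * (Ru j - dR j) * (Ru j)⁻¹ * H j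
        = (H j)ᵀ * (Ru j)⁻¹ * H j - (H j)ᵀ * (Ru j)⁻¹ * dR j * (Ru j)⁻¹ * H j := by
      rw [Matrix.mul_sub, Matrix.sub_mul, Matrix.sub_mul]
      congr 2
      rw [Matrix.nonsing_inv_mul_cancel_right _ _ ((hRu j).det_pos.ne'.isUnit)]
    rw [hRj, hcanc, smul_sub, sub_smul]
    abel
  have hexp : ((Phit - Phif) * Sf).trace
      = (∑ j, ((a j) ^ 2 - a j) * (((H j)ᵀ * (Ru j)⁻¹ * H j) * Sf).trace)
        - ∑ j, (a j) ^ 2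
            * ((((Ru j)⁻¹ * H j * Sf * (H j)ᵀ * (Ru j)⁻¹) * dR j)).trace := by
    rw [hsplit, Matrix.sub_mul, Matrix.trace_sub, Finset.sum_mul, Finset.sum_mul,
      Matrix.trace_sum, Matrix.trace_sum]
    congr 1
    · exact Finset.sum_congr rfl fun j _ => by
        rw [Matrix.smul_mul, Matrix.trace_smul, smul_eq_mul]
    · refine Finset.sum_congr rfl fun j _ => ?_
      rw [Matrix.smul_mul, Matrix.trace_smul, smul_eq_mul]
      congr 1
      have e : (H j)ᵀ * (Ru j)⁻¹ * dR j * (Ru j)⁻¹ * H j * Sf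
          = ((H j)ᵀ * ((Ru j)⁻¹ * dR j * (Ru j)⁻¹)) * (H j * Sf) := by
        simp only [Matrix.mul_assoc]
      rw [e, Matrix.trace_mul_comm]
      have e2 : H j * Sf * ((H j)ᵀ * ((Ru j)⁻¹ * dR j * (Ru j)⁻¹))
          = (H j * Sf * (H j)ᵀ * (Ru j)⁻¹ * dR j) * (Ru j)⁻¹ := by
        simp only [Matrix.mul_assoc]
      rw [e2, Matrix.trace_mul_comm]
      congr 1
      simp only [Matrix.mul_assoc]
  have hmain : Sigtbar.trace - Sigfbar.trace
      = (∑ j, ((a j) ^ 2 - a j) * (((H j)ᵀ * (Ru j)⁻¹ * H j) * Sf).trace)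
        - (∑ j, (a j) ^ 2
            * ((((Ru j)⁻¹ * H j * Sf * (H j)ᵀ * (Ru j)⁻¹) * dR j)).trace)
        - (P * dQ).trace := by
    have : D.trace = Sigtbar.trace - Sigfbar.trace := by rw [hD, Matrix.trace_sub]
    rw [← this, htrD, htrW, hexp]
  -- bounds
  have b1 : |∑ j, ((a j) ^ 2 - a j) * (((H j)ᵀ * (Ru j)⁻¹ * H j) * Sf).trace|
      ≤ ∑ j, |(a j) ^ 2 - a j| * frob Sf * frob ((H j)ᵀ * (Ru j)⁻¹ * H j) := by
    refine (Finset.abs_sum_le_sum_abs _ _).trans (Finset.sum_le_sum fun j _ => ?_)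
    rw [abs_mul]
    calc |(a j) ^ 2 - a j| * |(((H j)ᵀ * (Ru j)⁻¹ * H j) * Sf).trace|
        ≤ |(a j) ^ 2 - a j| * (frob ((H j)ᵀ * (Ru j)⁻¹ * H j) * frob Sf) :=
          mul_le_mul_of_nonneg_left (abs_trace_mul_le _ _) (abs_nonneg _)
      _ = |(a j) ^ 2 - a j| * frob Sf * frob ((H j)ᵀ * (Ru j)⁻¹ * H j) := by ring
  set s := Finset.univ.filter (fun j => 0 < a j) with hs
  have b2 : |∑ j, (a j) ^ 2
        * ((((Ru j)⁻¹ * H j * Sf * (H j)ᵀ * (Ru j)⁻¹) * dR j)).trace|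
      ≤ Real.sqrt (∑ j, ∑ k,
          (a j) ^ 2 * (a k) ^ 2 * (frob ((Ru j)⁻¹ * H j * Sf * (H k)ᵀ * (Ru k)⁻¹)) ^ 2)
        * Real.sqrt (∑ j ∈ s, (frob (dR j)) ^ 2) := by
    have hres : ∑ j, (a j) ^ 2
          * ((((Ru j)⁻¹ * H j * Sf * (H j)ᵀ * (Ru j)⁻¹) * dR j)).trace
        = ∑ j ∈ s, (a j) ^ 2
          * ((((Ru j)⁻¹ * H j * Sf * (H j)ᵀ * (Ru j)⁻¹) * dR j)).trace := by
      rw [hs]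
      refine (Finset.sum_filter_of_ne fun j _ hne => ?_).symm
      rcases lt_or_eq_of_le (ha j) with h | h
      · exact h
      · exfalso; apply hne; rw [← h]; ring
    rw [hres]
    calc |∑ j ∈ s, (a j) ^ 2 * ((((Ru j)⁻¹ * H j * Sf * (H j)ᵀ * (Ru j)⁻¹) * dR j)).trace|
        ≤ ∑ j ∈ s, |(a j) ^ 2 * ((((Ru j)⁻¹ * H j * Sf * (H j)ᵀ * (Ru j)⁻¹) * dR j)).trace| :=
          Finset.abs_sum_le_sum_abs _ _
      _ ≤ ∑ j ∈ s, ((a j) ^ 2 * frob ((Ru j)⁻¹ * H j * Sf * (H j)ᵀ * (Ru j)⁻¹))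
            * frob (dR j) := by
          refine Finset.sum_le_sum fun j _ => ?_
          rw [abs_mul, abs_of_nonneg (sq_nonneg (a j))]
          calc (a j) ^ 2 * |((((Ru j)⁻¹ * H j * Sf * (H j)ᵀ * (Ru j)⁻¹) * dR j)).trace|
              ≤ (a j) ^ 2 * (frob ((Ru j)⁻¹ * H j * Sf * (H j)ᵀ * (Ru j)⁻¹) * frob (dR j)) :=
                mul_le_mul_of_nonneg_left (abs_trace_mul_le _ _) (sq_nonneg _)
            _ = (a j) ^ 2 * frob ((Ru j)⁻¹ * H j * Sf * (H j)ᵀ * (Ru j)⁻¹) * frob (dR j) := by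
                ring
      _ ≤ Real.sqrt (∑ j ∈ s,
              ((a j) ^ 2 * frob ((Ru j)⁻¹ * H j * Sf * (H j)ᵀ * (Ru j)⁻¹)) ^ 2)
            * Real.sqrt (∑ j ∈ s, (frob (dR j)) ^ 2) := by
          have h := abs_sum_mul_le s
            (fun j => (a j) ^ 2 * frob ((Ru j)⁻¹ * H j * Sf * (H j)ᵀ * (Ru j)⁻¹))
            (fun j => frob (dR j))
          exact (le_abs_self _).trans h
      _ ≤ Real.sqrt (∑ j, ∑ k,
              (a j) ^ 2 * (a k) ^ 2
                * (frob ((Ru j)⁻¹ * H j * Sf * (H k)ᵀ * (Ru k)⁻¹)) ^ 2)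
            * Real.sqrt (∑ j ∈ s, (frob (dR j)) ^ 2) := by
          refine mul_le_mul_of_nonneg_right (Real.sqrt_le_sqrt ?_) (Real.sqrt_nonneg _)
          calc ∑ j ∈ s, ((a j) ^ 2 * frob ((Ru j)⁻¹ * H j * Sf * (H j)ᵀ * (Ru j)⁻¹)) ^ 2
              ≤ ∑ j, ((a j) ^ 2 * frob ((Ru j)⁻¹ * H j * Sf * (H j)ᵀ * (Ru j)⁻¹)) ^ 2 :=
                Finset.sum_le_sum_of_subset_of_nonneg (Finset.filter_subset _ _)
                  (fun j _ _ => sq_nonneg _)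
            _ ≤ ∑ j, ∑ k, (a j) ^ 2 * (a k) ^ 2
                  * (frob ((Ru j)⁻¹ * H j * Sf * (H k)ᵀ * (Ru k)⁻¹)) ^ 2 := by
                refine Finset.sum_le_sum fun j _ => ?_
                have hjj : ((a j) ^ 2 * frob ((Ru j)⁻¹ * H j * Sf * (H j)ᵀ * (Ru j)⁻¹)) ^ 2
                    = (a j) ^ 2 * (a j) ^ 2
                      * (frob ((Ru j)⁻¹ * H j * Sf * (H j)ᵀ * (Ru j)⁻¹)) ^ 2 := by ring
                rw [hjj]
                exact Finset.single_le_sum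
                  (f := fun k => (a j) ^ 2 * (a k) ^ 2
                    * (frob ((Ru j)⁻¹ * H j * Sf * (H k)ᵀ * (Ru k)⁻¹)) ^ 2)
                  (fun k _ => by positivity) (Finset.mem_univ j)
  have b3 : |(P * dQ).trace| ≤ frob P * frob dQ := abs_trace_mul_le P dQ
  have habs : |Sigtbar.trace - Sigfbar.trace| ≤ ρ := by
    rw [hmain, hρ]
    have t1 := b1; have t2 := b2; have t3 := b3
    set x := ∑ j, ((a j) ^ 2 - a j) * (((H j)ᵀ * (Ru j)⁻¹ * H j) * Sf).trace
    set y := ∑ j, (a j) ^ 2 * ((((Ru j)⁻¹ * H j * Sf * (H j)ᵀ * (Ru j)⁻¹) * dR j)).trace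
    set z := (P * dQ).trace
    have : |x - y - z| ≤ |x| + |y| + |z| := by
      calc |x - y - z| ≤ |x - y| + |z| := abs_sub _ _
        _ ≤ |x| + |y| + |z| := by have := abs_sub x y; linarith
    rw [hs] at t2
    linarith
  have h0 : 0 ≤ Sigtbar.trace := psd_trace_nonneg hSigtbar
  have hle := abs_le.mp habs
  exact ⟨max_le h0 (by linarith [hle.1]), by linarith [hle.2]⟩
end
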